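/- Let G be a graph whose girth is strictly greater than d, where d ≥ 2, and let v be a vertex of G. Then v is a d-local cutvertex of G if and only if v has degree at least 2. -/

import Mathlib

open SimpleGraph

variable {V : Type*}

/-- The ball of diameter `d` around `v`: the subgraph of vertices and edges
lying on closed walks of length at most `d` containing `v`. -/
def ball (G : SimpleGraph V) (v : V) (d : ℕ) : G.Subgraph where
  verts := {u | ∃ W : G.Walk v v, W.length ≤ d ∧ u ∈ W.support}
  Adj x y := ∃ W : G.Walk v v, W.length ≤ d ∧ s(x, y) ∈ W.edges
  adj_sub := fun ⟨W, _, he⟩ => W.adj_of_mem_edges he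
  edge_vert := fun ⟨W, hl, he⟩ => ⟨W, hl, W.fst_mem_support_of_mem_edges he⟩
  symm := ⟨fun x y ⟨W, hl, he⟩ => ⟨W, hl, by rwa [Sym2.eq_swap]⟩⟩

/-- v is a d-local cutvertex if the ball D_d(v) minus v is disconnected. -/
def IsLocalCutvertex (G : SimpleGraph V) (d : ℕ) (v : V) : Prop :=
  ¬ (((_root_.ball G v d).deleteVerts {v}).coe).Preconnected

namespace LocalCutAux

variable {G : SimpleGraph V} {d : ℕ} {v : V}

/-- No cycle of length at most `d` exists when the girth exceeds `d`. -/
lemma no_short_cycle (hg : (d : ℕ∞) < G.girth) {a : V} {W : G.Walk a a}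
    (hc : W.IsCycle) (hl : W.length ≤ d) : False := by
  have h1 : G.egirth ≤ (W.length : ℕ∞) := le_egirth.mp le_rfl a W hc
  have h2 : G.girth ≤ W.length := by
    have := ENat.toNat_le_toNat h1 (by simp)
    simpa [SimpleGraph.girth] using this
  have h3 : d < G.girth := by exact_mod_cast hg
  omega

lemma length_eq_one_of_mem_edges [DecidableEq V] : ∀ {x c : V} (p : G.Walk x c),
    p.IsPath → s(x, c) ∈ p.edges → p.length = 1 := by
  intro x c p
  induction p with
  | nil => simp
  | @cons x b c h q ihq =>
    intro hp he
    rw [Walk.edges_cons, List.mem_cons] at he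
    rcases he with he | he
    · have hbc : c = b := by
        rcases Sym2.eq_iff.mp he with ⟨-, h1⟩ | ⟨h1, h2⟩
        · exact h1
        · exact h2.trans h1
      subst hbc
      have hq : q.IsPath := ((Walk.cons_isPath_iff _ _).mp hp).1
      rw [(Walk.isPath_iff_eq_nil (p := q)).mp hq]
      simp
    · exfalso
      have hxs : x ∈ q.support := q.fst_mem_support_of_mem_edges he
      exact ((Walk.cons_isPath_iff _ _).mp hp).2 hxs

/-- Splitting a closed walk at a repeated vertex. -/
lemma split_closed_walk [DecidableEq V] {b : V} (W' : G.Walk b b)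
    (h2 : 2 ≤ W'.support.tail.count b) :
    ∃ (W₁ : G.Walk b b) (W₂ : G.Walk b b), W₁.length + W₂.length = W'.length ∧
      0 < W₁.length ∧ 0 < W₂.length ∧
      ∀ e, W'.edges.count e = W₁.edges.count e + W₂.edges.count e := by
  cases W' with
  | nil => simp at h2
  | @cons _ c _ h rest =>
    have h2' : 2 ≤ rest.support.count b := by simpa using h2
    have hbr : b ∈ rest.support := List.count_pos_iff.mp (by omega)
    refine ⟨Walk.cons h (rest.takeUntil b hbr), rest.dropUntil b hbr, ?_, ?_, ?_, ?_⟩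
    · have := congrArg Walk.length (rest.take_spec hbr)
      rw [Walk.length_append] at this
      simp only [Walk.length_cons]
      omega
    · simp
    · -- dropUntil is nonnil
      have hc1 : (rest.takeUntil b hbr).support.count b = 1 :=
        rest.count_support_takeUntil_eq_one hbr
      have hsp : rest.support = (rest.takeUntil b hbr).support ++
          (rest.dropUntil b hbr).support.tail := by
        conv_lhs => rw [← rest.take_spec hbr]
        rw [Walk.support_append]
      rw [hsp, List.count_append, hc1] at h2'
      have hmem : b ∈ (rest.dropUntil b hbr).support.tail :=
        List.count_pos_iff.mp (by omega)
      have hlen := (rest.dropUntil b hbr).length_support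
      have hcons := (rest.dropUntil b hbr).support_eq_cons
      have hne0 : (rest.dropUntil b hbr).support.tail.length ≠ 0 := by
        intro h0
        rw [List.length_eq_zero_iff] at h0
        rw [h0] at hmem
        simp at hmem
      rw [hcons, List.length_cons] at hlen
      omega
    · intro e
      have hre : rest.edges = (rest.takeUntil b hbr).edges ++
          (rest.dropUntil b hbr).edges := by
        conv_lhs => rw [← rest.take_spec hbr]
        rw [Walk.edges_append]
      simp only [Walk.edges_cons, hre, List.count_cons, List.count_append]
      omega

/-- Master lemma: in a graph of girth `> d`, every closed walk of length at most `d`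
traverses each edge an even number of times. -/
lemma even_count [DecidableEq V] (hg : (d : ℕ∞) < G.girth) :
    ∀ n, n ≤ d → ∀ (a : V) (W : G.Walk a a), W.length = n →
      ∀ e, Even (W.edges.count e) := by
  intro n
  induction n using Nat.strong_induction_on with
  | _ n ih =>
  intro hnd a W hn e
  rcases Nat.lt_or_ge n 3 with h3 | h3
  · interval_cases n
    · -- length 0
      have h0 : W.edges = [] := by
        have := W.length_edges
        rw [hn] at this
        exact List.eq_nil_of_length_eq_zero this
      simp [h0]
    · -- length 1: impossible
      exfalso
      cases W with
      | nil => simp at hn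
      | @cons _ c _ h q =>
        have : q.length = 0 := by simpa using hn
        exact absurd (Walk.eq_of_length_eq_zero this) h.ne'
    · -- length 2
      cases W with
      | nil => simp at hn
      | @cons _ c _ h q =>
        cases q with
        | nil => simp at hn
        | @cons _ c' _ h' q' =>
          have h0 : q'.length = 0 := by simpa using hn
          have hc := Walk.eq_of_length_eq_zero h0
          subst hc
          have hq' : q' = Walk.nil := by
            cases q' with
            | nil => rfl
            | cons h'' q'' => simp at h0
          subst hq'
          simp only [Walk.edges_cons, Walk.edges_nil]
          rw [Sym2.eq_swap]
          have key : ∀ (t : Sym2 V), Even (List.count e [t, t]) := by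
            intro t
            by_cases he : e = t <;> simp [List.count_cons, he]
          exact key _
  · by_cases hnodup : W.support.tail.Nodup
    · -- it would be a cycle: contradiction
      exfalso
      cases W with
      | nil => simp at hn; omega
      | @cons _ c _ h q =>
        have hq : q.IsPath := Walk.IsPath.mk' (by simpa using hnodup)
        have hne : s(a, c) ∉ q.edges := by
          intro hmem
          have hrev : s(a, c) ∈ q.reverse.edges := by
            rw [Walk.edges_reverse, List.mem_reverse]; exact hmem
          have := length_eq_one_of_mem_edges q.reverse hq.reverse hrev
          rw [Walk.length_reverse] at this
          rw [Walk.length_cons, this] at hn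
          omega
        exact no_short_cycle hg ((Walk.cons_isCycle_iff q h).mpr ⟨hq, hne⟩)
          (le_of_eq_of_le hn hnd)
    · -- repeated vertex: split and recurse
      obtain ⟨b, hb⟩ := List.exists_duplicate_iff_not_nodup.mpr hnodup
      have hb2 : 2 ≤ W.support.tail.count b := List.duplicate_iff_two_le_count.mp hb
      have hbt : b ∈ W.support.tail := List.count_pos_iff.mp (by omega)
      have hbsup : b ∈ W.support := by
        rw [W.support_eq_cons]
        exact List.mem_cons_of_mem _ hbt
      have hcount_eq : ∀ e', (W.rotate b hbsup).edges.count e' = W.edges.count e' :=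
        fun e' => ((W.rotate_edges b hbsup).perm.count_eq e')
      have hlen' : (W.rotate b hbsup).length = n := by
        have h1 := (W.rotate b hbsup).length_edges
        have h2 := W.length_edges
        have h3 : (W.rotate b hbsup).edges.length = W.edges.length :=
          (W.rotate_edges b hbsup).perm.length_eq
        omega
      have htail : 2 ≤ (W.rotate b hbsup).support.tail.count b := by
        rw [(W.support_rotate b hbsup).perm.count_eq]
        exact hb2
      obtain ⟨W₁, W₂, hsum, hp1, hp2, hcnt⟩ := split_closed_walk (W.rotate b hbsup) htail
      rw [← hcount_eq e, hcnt e]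
      have e1 := ih W₁.length (by omega) (by omega) b W₁ rfl e
      have e2 := ih W₂.length (by omega) (by omega) b W₂ rfl e
      exact e1.add e2

/-- If an edge `s(x,y)` lies on a walk from `a` to `c`, the distances add up. -/
lemma dist_sum [DecidableEq V] {x y : V} : ∀ {a c : V} (W : G.Walk a c), s(x, y) ∈ W.edges →
    G.dist a x + G.dist y c + 1 ≤ W.length ∨ G.dist a y + G.dist x c + 1 ≤ W.length := by
  intro a c W
  induction W with
  | nil => simp
  | @cons a b c h q ihq =>
    intro he
    rw [Walk.edges_cons, List.mem_cons] at he
    rcases he with he | he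
    · rcases Sym2.eq_iff.mp he with ⟨hx, hy⟩ | ⟨hx, hy⟩
      · subst hx; subst hy
        left
        have h1 : G.dist y c ≤ q.length := dist_le q
        simp only [Walk.length_cons, SimpleGraph.dist_self]
        omega
      · subst hx; subst hy
        right
        have h1 : G.dist x c ≤ q.length := dist_le q
        simp only [Walk.length_cons, SimpleGraph.dist_self]
        omega
    · rcases ihq he with hc | hc
      · left
        have hxs : x ∈ q.support := q.fst_mem_support_of_mem_edges he
        have hreach : G.Reachable b x := ⟨q.takeUntil x hxs⟩
        obtain ⟨p, hp⟩ := hreach.exists_walk_length_eq_dist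
        have h2 : G.dist a x ≤ G.dist b x + 1 := by
          have := dist_le (Walk.cons h p)
          rw [Walk.length_cons, hp] at this
          exact this
        simp only [Walk.length_cons]
        omega
      · right
        have hys : y ∈ q.support := q.snd_mem_support_of_mem_edges he
        have hreach : G.Reachable b y := ⟨q.takeUntil y hys⟩
        obtain ⟨p, hp⟩ := hreach.exists_walk_length_eq_dist
        have h2 : G.dist a y ≤ G.dist b y + 1 := by
          have := dist_le (Walk.cons h p)
          rw [Walk.length_cons, hp] at this
          exact this
        simp only [Walk.length_cons]
        omega

lemma ball_reach [DecidableEq V] {x : V} (hx : x ∈ (_root_.ball G v d).verts) :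
    G.Reachable v x ∧ G.dist v x + G.dist x v ≤ d := by
  obtain ⟨W, hl, hs⟩ := hx
  refine ⟨⟨W.takeUntil x hs⟩, ?_⟩
  have h1 := dist_le (W.takeUntil x hs)
  have h2 := dist_le (W.dropUntil x hs)
  have h3 : (W.takeUntil x hs).length + (W.dropUntil x hs).length = W.length := by
    have := congrArg Walk.length (W.take_spec hs)
    rw [Walk.length_append] at this
    exact this
  omega

/-- `z` is the first step of a geodesic from `v` to `x`. -/
def Fs (G : SimpleGraph V) (v z x : V) : Prop :=
  G.Adj v z ∧ G.dist z x + 1 = G.dist v x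

lemma fs_exists {x : V} (hr : G.Reachable v x) (hx : x ≠ v) : ∃ z, Fs G v z x := by
  obtain ⟨p, hp⟩ := hr.exists_walk_length_eq_dist
  cases p with
  | nil => exact absurd rfl hx
  | @cons _ z _ h q =>
    refine ⟨z, h, ?_⟩
    have h1 : G.dist z x ≤ q.length := dist_le q
    have hrzx : G.Reachable z x := ⟨q⟩
    obtain ⟨p', hp'⟩ := hrzx.exists_walk_length_eq_dist
    have h2 : G.dist v x ≤ G.dist z x + 1 := by
      have := dist_le (Walk.cons h p')
      rw [Walk.length_cons, hp'] at this
      exact this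
    have h3 : q.length + 1 = G.dist v x := by
      rw [← hp, Walk.length_cons]
    omega

lemma fs_unique [DecidableEq V] (hg : (d : ℕ∞) < G.girth) {x z₁ z₂ : V}
    (hr : G.Reachable v x) (h2d : 2 * G.dist v x ≤ d)
    (h1 : Fs G v z₁ x) (h2 : Fs G v z₂ x) : z₁ = z₂ := by
  by_contra hne
  obtain ⟨ha1, hd1⟩ := h1
  obtain ⟨ha2, hd2⟩ := h2
  have hr1 : G.Reachable z₁ x := (ha1.reachable.symm).trans hr
  have hr2 : G.Reachable z₂ x := (ha2.reachable.symm).trans hr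
  obtain ⟨p₁, hp₁, hl₁⟩ := hr1.exists_path_of_dist
  obtain ⟨p₂, hp₂, hl₂⟩ := hr2.exists_path_of_dist
  set C : G.Walk v v := Walk.cons ha1 (p₁.append (p₂.reverse.concat ha2.symm)) with hC
  have hCl : C.length = 2 * G.dist v x := by
    simp only [hC, Walk.length_cons, Walk.length_append, Walk.length_concat,
      Walk.length_reverse, hl₁, hl₂]
    omega
  have hv1 : v ∉ p₁.support := by
    intro hv
    have ha := dist_le (p₁.dropUntil v hv)
    have hb := p₁.length_dropUntil_le hv
    omega
  have hv2 : v ∉ p₂.support := by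
    intro hv
    have ha := dist_le (p₂.dropUntil v hv)
    have hb := p₂.length_dropUntil_le hv
    omega
  have hcount : C.edges.count s(v, z₁) = 1 := by
    have hnp1 : s(v, z₁) ∉ p₁.edges := fun hmem =>
      hv1 (p₁.fst_mem_support_of_mem_edges hmem)
    have hnp2 : s(v, z₁) ∉ p₂.reverse.edges := by
      rw [Walk.edges_reverse, List.mem_reverse]
      intro hmem
      exact hv2 (p₂.fst_mem_support_of_mem_edges hmem)
    have hnlast : s(v, z₁) ≠ s(z₂, v) := by
      intro hs
      rcases Sym2.eq_iff.mp hs with ⟨hA, hB⟩ | ⟨hA, hB⟩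
      · exact ha2.ne hA
      · exact hne hB
    simp only [hC, Walk.edges_cons, Walk.edges_append, Walk.edges_concat,
      List.concat_eq_append, List.count_append, List.count_cons]
    rw [List.count_eq_zero_of_not_mem hnp1, List.count_eq_zero_of_not_mem hnp2]
    simp only [List.count_nil, List.count_cons]
    simp [hnlast]
    exact ⟨fun h2 => absurd h2 ha2.ne', Ne.symm hne⟩
  have heven := even_count hg C.length (by omega) v C rfl s(v, z₁)
  rw [hcount] at heven
  simp at heven

lemma fs_step {x y z : V} (hrx : G.Reachable v x) (hxy : G.Adj x y)
    (hup : G.dist v y = G.dist v x + 1) (hz : Fs G v z x) : Fs G v z y := by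
  obtain ⟨ha, hdzx⟩ := hz
  refine ⟨ha, ?_⟩
  have hrzx : G.Reachable z x := (ha.reachable.symm).trans hrx
  obtain ⟨p, hp⟩ := hrzx.exists_walk_length_eq_dist
  have h1 : G.dist z y ≤ G.dist z x + 1 := by
    have := dist_le (p.concat hxy)
    rw [Walk.length_concat, hp] at this
    exact this
  have hrzy : G.Reachable z y := hrzx.trans hxy.reachable
  obtain ⟨p', hp'⟩ := hrzy.exists_walk_length_eq_dist
  have h2 : G.dist v y ≤ G.dist z y + 1 := by
    have := dist_le (Walk.cons ha p')
    rw [Walk.length_cons, hp'] at this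
    exact this
  omega

lemma not_equal_dist [DecidableEq V] (hg : (d : ℕ∞) < G.girth) {x y : V}
    (hrx : G.Reachable v x) (hry : G.Reachable v y) (hxy : G.Adj x y)
    (hsum : G.dist v x + G.dist v y + 1 ≤ d) (heq : G.dist v x = G.dist v y) : False := by
  obtain ⟨p, hp, hlp⟩ := hrx.exists_path_of_dist
  obtain ⟨q, hq, hlq⟩ := hry.exists_path_of_dist
  set C : G.Walk v v := p.append (Walk.cons hxy q.reverse) with hC
  have hCl : C.length ≤ d := by
    simp only [hC, Walk.length_append, Walk.length_cons, Walk.length_reverse, hlp, hlq]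
    omega
  have hyp : y ∉ p.support := by
    intro hv
    have h1 := dist_le (p.takeUntil y hv)
    have h3 : (p.takeUntil y hv).length + (p.dropUntil y hv).length = p.length := by
      have := congrArg Walk.length (p.take_spec hv)
      rw [Walk.length_append] at this
      exact this
    have h0 : (p.dropUntil y hv).length = 0 := by omega
    exact hxy.ne (Walk.eq_of_length_eq_zero h0).symm
  have hxq : x ∉ q.support := by
    intro hv
    have h1 := dist_le (q.takeUntil x hv)
    have h3 : (q.takeUntil x hv).length + (q.dropUntil x hv).length = q.length := by
      have := congrArg Walk.length (q.take_spec hv)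
      rw [Walk.length_append] at this
      exact this
    have h0 : (q.dropUntil x hv).length = 0 := by omega
    exact hxy.ne (Walk.eq_of_length_eq_zero h0)
  have hcount : C.edges.count s(x, y) = 1 := by
    have hnp : s(x, y) ∉ p.edges := fun hmem =>
      hyp (p.snd_mem_support_of_mem_edges hmem)
    have hnq : s(x, y) ∉ q.reverse.edges := by
      rw [Walk.edges_reverse, List.mem_reverse]
      intro hmem
      exact hxq (q.fst_mem_support_of_mem_edges hmem)
    simp only [hC, Walk.edges_append, Walk.edges_cons, List.count_append, List.count_cons]
    rw [List.count_eq_zero_of_not_mem hnp, List.count_eq_zero_of_not_mem hnq]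
    simp
  have heven := even_count hg C.length hCl v C rfl s(x, y)
  rw [hcount] at heven
  simp at heven

lemma fs_transfer [DecidableEq V] (hg : (d : ℕ∞) < G.girth) {x y z : V}
    (hx : x ∈ (_root_.ball G v d).verts) (hy : y ∈ (_root_.ball G v d).verts)
    (hxv : x ≠ v) (hyv : y ≠ v) (hadj : (_root_.ball G v d).Adj x y)
    (hz : Fs G v z x) : Fs G v z y := by
  obtain ⟨W, hl, he⟩ := hadj
  obtain ⟨hrx, hbx⟩ := ball_reach hx
  obtain ⟨hry, hby⟩ := ball_reach hy
  have hGxy : G.Adj x y := W.adj_of_mem_edges he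
  have hsum : G.dist v x + G.dist v y + 1 ≤ d := by
    rcases dist_sum W he with hc | hc
    · rw [dist_comm (u := y)] at hc
      omega
    · rw [dist_comm (u := x)] at hc
      omega
  -- distances differ by at most one
  have hd1 : G.dist v y ≤ G.dist v x + 1 := by
    obtain ⟨p, hp⟩ := hrx.exists_walk_length_eq_dist
    have := dist_le (p.concat hGxy)
    rw [Walk.length_concat, hp] at this
    exact this
  have hd2 : G.dist v x ≤ G.dist v y + 1 := by
    obtain ⟨p, hp⟩ := hry.exists_walk_length_eq_dist
    have := dist_le (p.concat hGxy.symm)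
    rw [Walk.length_concat, hp] at this
    exact this
  rcases Nat.lt_trichotomy (G.dist v x) (G.dist v y) with hlt | heq | hgt
  · exact fs_step hrx hGxy (by omega) hz
  · exact (not_equal_dist hg hrx hry hGxy hsum heq).elim
  · obtain ⟨z', hz'⟩ := fs_exists hry hyv
    have hzx' : Fs G v z' x := fs_step hry hGxy.symm (by omega) hz'
    have h2dx : 2 * G.dist v x ≤ d := by
      rw [dist_comm (u := x)] at hbx
      omega
    have : z' = z := fs_unique hg hrx h2dx hzx' hz
    rw [← this]
    exact hz'

lemma transfer_walk [DecidableEq V] (hg : (d : ℕ∞) < G.girth)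
    {A B : ↥(((_root_.ball G v d).deleteVerts {v}).verts)}
    (p : (((_root_.ball G v d).deleteVerts {v}).coe).Walk A B) :
    ∀ z, Fs G v z A.val → Fs G v z B.val := by
  induction p with
  | nil => exact fun z h => h
  | cons h q ihq =>
    intro z hz
    apply ihq
    have h' := h
    rw [Subgraph.coe_adj, Subgraph.deleteVerts_adj] at h'
    obtain ⟨hxm, hxv, hym, hyv, hadj⟩ := h'
    simp only [Set.mem_singleton_iff] at hxv hyv
    exact fs_transfer hg hxm hym hxv hyv hadj hz

lemma nbr_mem (hd : 2 ≤ d) {u : V} (hu : G.Adj v u) :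
    u ∈ (((_root_.ball G v d).deleteVerts {v}).verts) := by
  refine ⟨⟨Walk.cons hu (Walk.cons hu.symm Walk.nil), ?_, ?_⟩, ?_⟩
  · simpa using hd
  · simp
  · simp [hu.ne']

lemma reach_nbr (hd : 2 ≤ d) : ∀ {x y : V} (r : G.Walk x y), y = v → ∀ (W : G.Walk v v),
    W.length ≤ d → (∀ e ∈ r.edges, e ∈ W.edges) → x ≠ v →
    ∀ (hxm : x ∈ (((_root_.ball G v d).deleteVerts {v}).verts)),
    ∃ (z : V) (hzm : z ∈ (((_root_.ball G v d).deleteVerts {v}).verts)), G.Adj v z ∧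
      ((((_root_.ball G v d).deleteVerts {v}).coe)).Reachable ⟨x, hxm⟩ ⟨z, hzm⟩ := by
  intro x y r
  induction r with
  | nil =>
    intro hy W hl hsub hxv hxm
    exact absurd hy hxv
  | @cons x c _ h r' ih =>
    intro hy W hl hsub hxv hxm
    by_cases hcv : c = v
    · subst hcv
      exact ⟨x, hxm, h.symm, Reachable.refl _⟩
    · have hec : s(x, c) ∈ W.edges := hsub _ (by simp [Walk.edges_cons])
      have hcm : c ∈ (((_root_.ball G v d).deleteVerts {v}).verts) := by
        refine ⟨⟨W, hl, W.snd_mem_support_of_mem_edges hec⟩, ?_⟩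
        simp [hcv]
      obtain ⟨z, hzm, hza, hreach⟩ :=
        ih hy W hl (fun e he => hsub e (by simp [Walk.edges_cons, he])) hcv hcm
      refine ⟨z, hzm, hza, ?_⟩
      have hadj : ((((_root_.ball G v d).deleteVerts {v}).coe)).Adj ⟨x, hxm⟩ ⟨c, hcm⟩ := by
        rw [Subgraph.coe_adj, Subgraph.deleteVerts_adj]
        exact ⟨hxm.1, by simp [hxv], hcm.1, by simp [hcv], W, hl, hec⟩
      exact hadj.reachable.trans hreach

end LocalCutAux

theorem stmt6 (G : SimpleGraph V) (d : ℕ) (hd : 2 ≤ d) (hg : (d : ℕ∞) < G.girth) (v : V) :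
    IsLocalCutvertex G d v ↔ ∃ u w : V, u ≠ w ∧ G.Adj v u ∧ G.Adj v w := by
  classical
  open LocalCutAux in
  constructor
  · intro hcut
    by_contra hno
    push_neg at hno
    have huniq : ∀ u w : V, G.Adj v u → G.Adj v w → u = w := by
      intro u w h1 h2
      by_contra hne
      exact (hno u w hne h1) h2
    apply hcut
    rintro ⟨x, hxm⟩ ⟨y, hym⟩
    have hxv : x ≠ v := by
      have := hxm.2
      simpa using this
    have hyv : y ≠ v := by
      have := hym.2
      simpa using this
    obtain ⟨Wx, hlx, hsx⟩ := hxm.1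
    obtain ⟨Wy, hly, hsy⟩ := hym.1
    obtain ⟨zx, hzxm, hzxa, hrx⟩ := reach_nbr hd (Wx.dropUntil x hsx) rfl Wx hlx
      (Wx.edges_dropUntil_subset hsx) hxv hxm
    obtain ⟨zy, hzym, hzya, hry⟩ := reach_nbr hd (Wy.dropUntil y hsy) rfl Wy hly
      (Wy.edges_dropUntil_subset hsy) hyv hym
    have hz : zx = zy := huniq _ _ hzxa hzya
    subst hz
    have : (⟨zx, hzxm⟩ : ↥(((_root_.ball G v d).deleteVerts {v}).verts)) = ⟨zx, hzym⟩ := rfl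
    exact hrx.trans (this ▸ hry.symm)
  · rintro ⟨u, w, huw, hu, hw⟩ hpre
    have hum := nbr_mem hd hu
    have hwm := nbr_mem hd hw
    obtain ⟨p⟩ := hpre ⟨u, hum⟩ ⟨w, hwm⟩
    have hdu : G.dist v u = 1 := dist_eq_one_iff_adj.mpr hu
    have hdw : G.dist v w = 1 := dist_eq_one_iff_adj.mpr hw
    have h1 : Fs G v u u := ⟨hu, by simp [hdu]⟩
    have h2 : Fs G v u w := transfer_walk hg p u h1
    have h3 : Fs G v w w := ⟨hw, by simp [hdw]⟩
    have : u = w := fs_unique hg hw.reachable (by omega) h2 h3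
    exact huw this
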